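/- Let A be an abelian category, (T, F) a torsion pair, and V an object with T = Gen(V) = Pres(V) and T ⊆ Ker(Ext^1_A(V,−)). If M is an object admitting an exact sequence 0 → M → T_1 → T_2 → 0 with T_1, T_2 ∈ T, and Ext^1_A(V^{(I)}, M) = 0 for all sets I, then M ∈ T. (Proof via pullback: choose an epimorphism q : V^{(α)} → T_2 with kernel in T, form the pullback Z of T_1 → T_2 ← V^{(α)}; then Z ∈ T and the sequence 0 → M → Z → V^{(α)} → 0 splits, exhibiting M as a direct summand of Z.) -/
import Mathlib


open CategoryTheory CategoryTheory.Limits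

universe v u

namespace Paper

/-- A torsion pair `(T, F)` in an abelian category. -/
structure TorsionPair {C : Type u} [Category.{v} C] [Abelian C] (T F : C → Prop) : Prop where
  isoClosed_torsion : ∀ {X Y : C}, (X ≅ Y) → T X → T Y
  isoClosed_free : ∀ {X Y : C}, (X ≅ Y) → F X → F Y
  hom_eq_zero : ∀ {X Y : C}, T X → F Y → ∀ f : X ⟶ Y, f = 0
  exists_ses : ∀ X : C, ∃ (TX FX : C) (i : TX ⟶ X) (p : X ⟶ FX) (w : i ≫ p = 0),
      T TX ∧ F FX ∧ (ShortComplex.mk i p w).ShortExact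

variable {C : Type u} [Category.{v} C] [Abelian C]

/-- `X` is `V`-generated. -/
def Gen (V : C) [∀ I : Type v, HasCoproduct (fun _ : I => V)] (X : C) : Prop :=
  ∃ (I : Type v) (p : (∐ (fun _ : I => V)) ⟶ X), Epi p

/-- `X` is `V`-presented. -/
def Pres (V : C) [∀ I : Type v, HasCoproduct (fun _ : I => V)] (X : C) : Prop :=
  ∃ (I J : Type v) (g : (∐ (fun _ : J => V)) ⟶ (∐ (fun _ : I => V)))
    (p : (∐ (fun _ : I => V)) ⟶ X) (w : g ≫ p = 0),
      Epi p ∧ (ShortComplex.mk g p w).Exact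

/-- `Ext¹(W, X) = 0`: every short exact sequence `0 → X → E → W → 0` splits. -/
def ext1Zero (W X : C) : Prop :=
  ∀ (E : C) (a : X ⟶ E) (b : E ⟶ W) (w : a ≫ b = 0),
    (ShortComplex.mk a b w).ShortExact → ∃ s : W ⟶ E, s ≫ b = 𝟙 W

/-- If all maps to torsion-free objects vanish, the object is torsion. -/
lemma mem_torsion_of_hom {T F : C → Prop} (htp : TorsionPair T F) {X : C}
    (h : ∀ Y : C, F Y → ∀ f : X ⟶ Y, f = 0) : T X := by
  obtain ⟨TX, FX, a, b, wab, hT, hF, hseX⟩ := htp.exists_ses X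
  have hb : b = 0 := h FX hF b
  have : Epi ((ShortComplex.mk a b wab).f) := hseX.exact.epi_f hb
  have : Mono ((ShortComplex.mk a b wab).f) := hseX.mono_f
  have : IsIso a := isIso_of_mono_of_epi (C := C) a
  exact htp.isoClosed_torsion (asIso a) hT

/-- Torsion classes are closed under extensions. -/
lemma torsion_extension {T F : C → Prop} (htp : TorsionPair T F)
    {A Z B : C} (a : A ⟶ Z) (b : Z ⟶ B) (wab : a ≫ b = 0)
    (hse : (ShortComplex.mk a b wab).ShortExact) (hA : T A) (hB : T B) : T Z := by
  refine mem_torsion_of_hom htp (fun Y hY f => ?_)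
  have haf : a ≫ f = 0 := htp.hom_eq_zero hA hY (a ≫ f)
  let hcok : IsColimit (CokernelCofork.ofπ (ShortComplex.mk a b wab).g
      (ShortComplex.mk a b wab).zero) := hse.gIsCokernel
  obtain ⟨g, hg⟩ := CokernelCofork.IsColimit.desc' hcok f haf
  have : g = 0 := htp.hom_eq_zero hB hY g
  rw [← hg, this, Limits.comp_zero]

/-- let `(T, F)` be a torsion pair with `T = Gen(V) = Pres(V)` and
`T ⊆ Ker Ext¹(V,−)`.  If `M` admits a short exact sequence `0 → M → T₁ → T₂ → 0` with
`T₁, T₂ ∈ T` and `Ext¹(V^{(I)}, M) = 0` for all sets `I`, then `M ∈ T`. -/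
theorem statement18 {T F : C → Prop} (htp : TorsionPair T F)
    (V : C) [∀ I : Type v, HasCoproduct (fun _ : I => V)]
    (hTgen : ∀ X : C, T X ↔ Gen V X) (hTpres : ∀ X : C, T X ↔ Pres V X)
    (hText : ∀ X : C, T X → ext1Zero V X)
    (M T₁ T₂ : C) (i : M ⟶ T₁) (p : T₁ ⟶ T₂) (w : i ≫ p = 0)
    (hse : (ShortComplex.mk i p w).ShortExact) (h₁ : T T₁) (h₂ : T T₂)
    (hM : ∀ I : Type v, ext1Zero (∐ (fun _ : I => V)) M) :
    T M := by
  obtain ⟨I, J, g, q, wq, hq_epi, hq_exact⟩ := (hTpres T₂).mp h₂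
  haveI : Epi p := hse.epi_g
  haveI : Epi q := hq_epi
  haveI : Mono i := hse.mono_f
  -- the kernel of `q` is torsion, being a quotient of `V^{(J)}`
  haveI : Epi (ShortComplex.mk g q wq).toCycles :=
    (ShortComplex.exact_iff_epi_toCycles _).mp hq_exact
  have hK : T (kernel q) := (hTgen _).mpr
    ⟨J, (ShortComplex.mk g q wq).toCycles ≫ (ShortComplex.mk g q wq).cyclesIsoKernel.hom,
      epi_comp _ _⟩
  -- form the pullback of `p` and `q`
  let Z := pullback p q
  let f₁ : Z ⟶ T₁ := pullback.fst p q
  let f₂ : Z ⟶ ∐ (fun _ : I => V) := pullback.snd p q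
  have hcond : f₁ ≫ p = f₂ ≫ q := pullback.condition
  haveI : Epi f₁ := inferInstanceAs (Epi (pullback.fst p q))
  haveI : Epi f₂ := inferInstanceAs (Epi (pullback.snd p q))
  -- the kernel of `f₁` is the kernel of `q`
  have hk0 : (0 : kernel q ⟶ T₁) ≫ p = kernel.ι q ≫ q := by simp
  let k : kernel q ⟶ Z := pullback.lift 0 (kernel.ι q) hk0
  have wk : k ≫ f₁ = 0 := pullback.lift_fst _ _ _
  have hksnd : k ≫ f₂ = kernel.ι q := pullback.lift_snd _ _ _
  haveI : Mono k := mono_of_mono_fac hksnd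
  have hkker : IsLimit (KernelFork.ofι k wk) := by
    refine KernelFork.IsLimit.ofι' k wk (fun {A} t ht => ?_)
    have h1 : (t ≫ f₂) ≫ q = 0 := by
      rw [Category.assoc, ← hcond, ← Category.assoc, ht, zero_comp]
    refine ⟨kernel.lift q (t ≫ f₂) h1, ?_⟩
    apply pullback.hom_ext
    · show (_ ≫ k) ≫ f₁ = t ≫ f₁
      rw [Category.assoc, wk, comp_zero, ht]
    · show (_ ≫ k) ≫ f₂ = t ≫ f₂
      rw [Category.assoc, hksnd, kernel.lift_ι]
  have hseZ : (ShortComplex.mk k f₁ wk).ShortExact :=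
    { exact := ShortComplex.exact_of_f_is_kernel _ hkker
      mono_f := ‹Mono k›
      epi_g := ‹Epi f₁› }
  -- `Z` is torsion as an extension of torsion objects
  have hZ : T Z := torsion_extension htp k f₁ wk hseZ hK h₁
  -- `M` is the kernel of `f₂`
  have hj0 : i ≫ p = (0 : M ⟶ ∐ fun _ : I => V) ≫ q := by simp [w]
  let j : M ⟶ Z := pullback.lift i 0 hj0
  have hjfst : j ≫ f₁ = i := pullback.lift_fst _ _ _
  have wj : j ≫ f₂ = 0 := pullback.lift_snd _ _ _
  haveI : Mono j := mono_of_mono_fac hjfst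
  have hiker : IsLimit (KernelFork.ofι i w) := hse.fIsKernel
  have hjker : IsLimit (KernelFork.ofι j wj) := by
    refine KernelFork.IsLimit.ofι' j wj (fun {A} t ht => ?_)
    have h1 : (t ≫ f₁) ≫ p = 0 := by
      rw [Category.assoc, hcond, ← Category.assoc, ht, zero_comp]
    obtain ⟨l, hl⟩ := Fork.IsLimit.lift' hiker (t ≫ f₁) (by rw [comp_zero]; exact h1)
    simp only [Fork.ι_ofι] at hl
    refine ⟨l, ?_⟩
    apply pullback.hom_ext
    · show (l ≫ j) ≫ f₁ = t ≫ f₁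
      rw [Category.assoc, hjfst, hl]
    · show (l ≫ j) ≫ f₂ = t ≫ f₂
      rw [Category.assoc, wj, comp_zero, ht]
  have hseM : (ShortComplex.mk j f₂ wj).ShortExact :=
    { exact := ShortComplex.exact_of_f_is_kernel _ hjker
      mono_f := ‹Mono j›
      epi_g := ‹Epi f₂› }
  -- the sequence `0 → M → Z → V^{(I)} → 0` splits
  obtain ⟨s, hs⟩ := hM I Z j f₂ wj hseM
  -- produce a retraction `r : Z ⟶ M` of `j`
  have he : (𝟙 Z - f₂ ≫ s) ≫ f₂ = 0 := by
    rw [Preadditive.sub_comp, Category.id_comp, Category.assoc, hs, Category.comp_id, sub_self]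
  obtain ⟨r, hr⟩ := Fork.IsLimit.lift' hjker (𝟙 Z - f₂ ≫ s) (by rw [comp_zero]; exact he)
  simp only [Fork.ι_ofι] at hr
  have hjr : j ≫ r = 𝟙 M := by
    rw [← cancel_mono j, Category.assoc, hr, Preadditive.comp_sub, Category.comp_id,
      ← Category.assoc, wj, zero_comp, sub_zero, Category.id_comp]
  haveI : Epi r := epi_of_epi_fac hjr
  -- conclude: `M` is a quotient of the torsion object `Z`
  obtain ⟨γ, c, hc⟩ := (hTgen Z).mp hZ
  haveI := hc
  exact (hTgen M).mpr ⟨γ, c ≫ r, epi_comp _ _⟩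

end Paper
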